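/- Let R = 𝔬/𝔭^ℓ with unit group action of 𝔬^× on R by multiplication, and let 𝔬^×_r = {1 + aπ^{r+1} | a ∈ 𝔬} for r ≥ 0 (with 𝔬^×_{-∞} = 𝔬^×). For 0 ≤ s ≤ r ≤ ℓ-1 and characters χ, χ' ∈ R̂ with v̂(χ) = v̂(χ') = r, the following are equivalent: (i) χ and χ' lie in the same 𝔬^×_{r-s}-orbit under the contragredient action; (ii) χ = χ' on the subgroup 𝔭^s/𝔭^ℓ; (iii) v̂(χ·χ'^{-1}) ≤ s-1 (where v̂(1) = -∞). -/

import Mathlib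

/-- The image in `R = 𝔬/𝔭^ℓ` of the ideal `𝔭^r`. -/
def idealImage (O : Type) [CommRing O] (π : O) (ℓ r : ℕ) :
    Ideal (O ⧸ (Ideal.span {π} ^ ℓ)) :=
  Ideal.map (Ideal.Quotient.mk (Ideal.span {π} ^ ℓ)) (Ideal.span {π} ^ r)

/-- The set of characters `χ` of `R = 𝔬/𝔭^ℓ` with dual valuation `v̂(χ) = r`. -/
def dualLevel (O : Type) [CommRing O] (π : O) (ℓ r : ℕ) :
    Set (AddChar (O ⧸ (Ideal.span {π} ^ ℓ)) ℂ) :=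
  {χ | (∀ a ∈ idealImage O π ℓ (r + 1), χ a = 1) ∧ ∃ a ∈ idealImage O π ℓ r, χ a ≠ 1}

section helpers



variable {O : Type} [CommRing O]

lemma mem_map_pow (π : O) (m k : ℕ) (b : O ⧸ (Ideal.span {π} ^ m)) :
    b ∈ Ideal.map (Ideal.Quotient.mk (Ideal.span {π} ^ m)) (Ideal.span {π} ^ k) ↔
      ∃ y : O, b = Ideal.Quotient.mk (Ideal.span {π} ^ m) (π ^ k * y) := by
  rw [show (Ideal.span {π} : Ideal O) ^ k = Ideal.span {π ^ k} from Ideal.span_singleton_pow π k,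
    Ideal.map_span, Set.image_singleton, Ideal.mem_span_singleton']
  constructor
  · rintro ⟨a, rfl⟩
    obtain ⟨y, rfl⟩ := Ideal.Quotient.mk_surjective a
    exact ⟨y, by rw [← map_mul, mul_comm]⟩
  · rintro ⟨y, rfl⟩
    exact ⟨Ideal.Quotient.mk _ y, by rw [← map_mul, mul_comm]⟩

lemma finite_quot_pow (π : O) [Finite (O ⧸ Ideal.span {π})] (k : ℕ) :
    Finite (O ⧸ (Ideal.span {π} ^ k)) := by
  induction k with
  | zero =>
    haveI : Subsingleton (O ⧸ (Ideal.span {π} ^ 0)) :=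
      Ideal.Quotient.subsingleton_iff.mpr (by simp)
    infer_instance
  | succ k ih =>
    set I : Ideal O := Ideal.span {π} with hI
    set J : Ideal (O ⧸ I ^ (k + 1)) :=
      Ideal.map (Ideal.Quotient.mk (I ^ (k + 1))) (I ^ k) with hJ
    have hπI : π ∈ I := Ideal.mem_span_singleton_self π
    -- the linear map `O ⧸ I → O ⧸ I^(k+1)` given by multiplication by `π^k`
    have hker : (I : Submodule O O) ≤
        LinearMap.ker (π ^ k • (I ^ (k + 1) : Ideal O).mkQ) := by
      intro x hx
      simp only [LinearMap.mem_ker, LinearMap.smul_apply, Submodule.mkQ_apply,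
        ← Submodule.Quotient.mk_smul, Submodule.Quotient.mk_eq_zero]
      have : π ^ k * x ∈ I ^ k * I := Ideal.mul_mem_mul (Ideal.pow_mem_pow hπI k) hx
      simpa [← pow_succ] using this
    set g : (O ⧸ I) →ₗ[O] (O ⧸ I ^ (k + 1)) :=
      Submodule.liftQ (I : Submodule O O) (π ^ k • (I ^ (k + 1) : Ideal O).mkQ) hker with hg
    have hJfin : Finite J := by
      have hsub : (J : Set (O ⧸ I ^ (k + 1))) ⊆ Set.range g := by
        intro b hb
        obtain ⟨y, rfl⟩ := (mem_map_pow π (k+1) k b).mp hb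
        refine ⟨Submodule.Quotient.mk y, ?_⟩
        show (π ^ k • (I ^ (k + 1) : Ideal O).mkQ) y = _
        simp only [LinearMap.smul_apply, Submodule.mkQ_apply,
          ← Submodule.Quotient.mk_smul]
        rfl
      exact Set.Finite.to_subtype ((Set.finite_range g).subset hsub)
    have hQfin : Finite ((O ⧸ I ^ (k + 1)) ⧸ J) := by
      have e := DoubleQuot.quotQuotEquivQuotSup (I ^ (k + 1)) (I ^ k)
      have hsup : I ^ (k + 1) ⊔ I ^ k = I ^ k :=
        sup_eq_right.mpr (Ideal.pow_le_pow_right (Nat.le_succ k))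
      rw [hsup] at e
      exact Finite.of_equiv _ e.symm.toEquiv
    exact Finite.of_ideal_quotient (I := J)

lemma addchar_ne_zero {A : Type*} [AddCommGroup A] (χ : AddChar A ℂ) (x : A) :
    χ x ≠ 0 := by
  intro h
  have h2 : χ (x + (-x)) = χ x * χ (-x) := AddChar.map_add_eq_mul χ x (-x)
  rw [add_neg_cancel, AddChar.map_zero_eq_one, h, zero_mul] at h2
  exact one_ne_zero h2

lemma addchar_eq_of_sub {A : Type*} [AddCommGroup A] (χ : AddChar A ℂ) {u v : A}
    (h : χ (u - v) = 1) : χ u = χ v := by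
  have : χ (v + (u - v)) = χ v * χ (u - v) := AddChar.map_add_eq_mul χ v (u - v)
  rw [add_sub_cancel, h, mul_one] at this
  exact this



variable {O : Type} [CommRing O]

lemma exists_mulShift [IsDomain O] [IsDiscreteValuationRing O]
    (π : O) (hπ : Irreducible π) (ℓ r : ℕ) [Finite (O ⧸ Ideal.span {π})]
    (hrℓ : r + 1 ≤ ℓ)
    (χ : AddChar (O ⧸ (Ideal.span {π} ^ ℓ)) ℂ)
    (hχ1 : ∀ a ∈ idealImage O π ℓ (r + 1), χ a = 1)
    (hχ2 : ∃ a ∈ idealImage O π ℓ r, χ a ≠ 1)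
    (η : AddChar (O ⧸ (Ideal.span {π} ^ ℓ)) ℂ)
    (hη : ∀ a ∈ idealImage O π ℓ (r + 1), η a = 1) :
    ∃ a₀ : O, η = χ.mulShift (Ideal.Quotient.mk (Ideal.span {π} ^ ℓ) a₀) := by
  haveI hRfin : Finite (O ⧸ Ideal.span {π} ^ ℓ) := finite_quot_pow π ℓ
  haveI hQfin : Finite (O ⧸ Ideal.span {π} ^ (r + 1)) := finite_quot_pow π (r + 1)
  set ρ : (O ⧸ Ideal.span {π} ^ ℓ) →+* (O ⧸ Ideal.span {π} ^ (r + 1)) := Ideal.Quotient.factor (S := Ideal.span {π} ^ ℓ) (T := Ideal.span {π} ^ (r + 1))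
      (Ideal.pow_le_pow_right hrℓ) with hρ
  have hρsurj : Function.Surjective ρ := by
    intro x
    obtain ⟨y, rfl⟩ := Ideal.Quotient.mk_surjective x
    exact ⟨Ideal.Quotient.mk _ y, Ideal.Quotient.factor_mk _ y⟩
  -- kernel description
  have hker : ∀ b : O ⧸ Ideal.span {π} ^ ℓ, ρ b = 0 ↔ b ∈ idealImage O π ℓ (r + 1) := by
    intro b
    obtain ⟨x, rfl⟩ := Ideal.Quotient.mk_surjective b
    rw [Ideal.Quotient.factor_mk, Ideal.Quotient.eq_zero_iff_mem]
    constructor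
    · intro hx; exact Ideal.mem_map_of_mem _ hx
    · intro hb
      obtain ⟨y, hy⟩ := (mem_map_pow π ℓ (r + 1) _).mp hb
      have : Ideal.Quotient.mk (Ideal.span {π} ^ (r+1)) x = Ideal.Quotient.mk (Ideal.span {π} ^ (r+1)) (π ^ (r+1) * y) := by
        have := congrArg ρ hy
        rwa [Ideal.Quotient.factor_mk, Ideal.Quotient.factor_mk] at this
      rw [← Ideal.Quotient.eq_zero_iff_mem, this, Ideal.Quotient.eq_zero_iff_mem]
      exact Ideal.mul_mem_right y _ (Ideal.pow_mem_pow (Ideal.mem_span_singleton_self π) (r+1))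
  have hcong : ∀ (η' : AddChar (O ⧸ Ideal.span {π} ^ ℓ) ℂ), (∀ a ∈ idealImage O π ℓ (r + 1), η' a = 1) →
      ∀ u v : O ⧸ Ideal.span {π} ^ ℓ, ρ u = ρ v → η' u = η' v := by
    intro η' hη' u v huv
    apply addchar_eq_of_sub
    apply hη'
    rw [← hker, map_sub, huv, sub_self]
  classical
  set sInv : (O ⧸ Ideal.span {π} ^ (r + 1)) → (O ⧸ Ideal.span {π} ^ ℓ) := Function.surjInv hρsurj with hsInv
  have hsInv_eq : ∀ x, ρ (sInv x) = x := fun x => Function.surjInv_eq hρsurj x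
  set T := {η' : AddChar (O ⧸ Ideal.span {π} ^ ℓ) ℂ // ∀ a ∈ idealImage O π ℓ (r + 1), η' a = 1} with hT
  haveI : Finite T := Subtype.finite
  have hGmem : ∀ ψ : AddChar (O ⧸ Ideal.span {π} ^ (r + 1)) ℂ, ∀ a ∈ idealImage O π ℓ (r + 1),
      (ψ.compAddMonoidHom ρ.toAddMonoidHom) a = 1 := by
    intro ψ a ha
    have h0 : ρ a = 0 := (hker a).mpr ha
    show ψ (ρ a) = 1
    rw [h0]
    exact ψ.map_zero_eq_one
  set G : AddChar (O ⧸ Ideal.span {π} ^ (r + 1)) ℂ → T := fun ψ => ⟨ψ.compAddMonoidHom ρ.toAddMonoidHom, hGmem ψ⟩ with hG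
  have hGinj : Function.Injective G := by
    intro ψ ψ' h
    have h2 := congrArg Subtype.val h
    ext x
    obtain ⟨b, rfl⟩ := hρsurj x
    exact DFunLike.congr_fun h2 b
  have hGsurj : Function.Surjective G := by
    rintro ⟨η', hη'⟩
    refine ⟨{ toFun := fun x => η' (sInv x)
              map_zero_eq_one' := ?_
              map_add_eq_mul' := ?_ }, ?_⟩
    · show η' (sInv 0) = 1
      have h1 : η' (sInv 0) = η' 0 := hcong η' hη' _ _ (by rw [hsInv_eq, map_zero])
      rw [h1]; exact η'.map_zero_eq_one
    · intro a b
      have h1 : η' (sInv (a + b)) = η' (sInv a + sInv b) :=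
        hcong η' hη' _ _ (by rw [hsInv_eq, map_add, hsInv_eq, hsInv_eq])
      show η' (sInv (a + b)) = η' (sInv a) * η' (sInv b)
      rw [h1, AddChar.map_add_eq_mul]
    · apply Subtype.ext
      ext b
      show η' (sInv (ρ b)) = η' b
      exact hcong η' hη' _ _ (hsInv_eq _)
  have hcard : Nat.card (O ⧸ Ideal.span {π} ^ (r + 1)) = Nat.card T := by
    have e := Nat.card_congr (Equiv.ofBijective G ⟨hGinj, hGsurj⟩)
    rw [← e]
    haveI : Fintype (O ⧸ Ideal.span {π} ^ (r + 1)) := Fintype.ofFinite _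
    rw [Nat.card_eq_fintype_card, Nat.card_eq_fintype_card, AddChar.card_eq]
  have hMmem : ∀ a : O ⧸ Ideal.span {π} ^ ℓ, ∀ b ∈ idealImage O π ℓ (r + 1), (χ.mulShift a) b = 1 := by
    intro a b hb
    rw [AddChar.mulShift_apply]
    exact hχ1 _ (Ideal.mul_mem_left _ a hb)
  set N : (O ⧸ Ideal.span {π} ^ (r + 1)) → T := fun x => ⟨χ.mulShift (sInv x), hMmem (sInv x)⟩ with hN
  have hnondeg : ∀ d : O ⧸ Ideal.span {π} ^ ℓ, (∀ b : O ⧸ Ideal.span {π} ^ ℓ, χ (d * b) = 1) → d ∈ idealImage O π ℓ (r + 1) := by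
    intro d hd
    by_contra hmem
    obtain ⟨z, rfl⟩ := Ideal.Quotient.mk_surjective d
    have hz : z ∉ Ideal.span {π} ^ (r + 1) := fun h => hmem (Ideal.mem_map_of_mem _ h)
    have hz0 : z ≠ 0 := fun h => hz (h ▸ zero_mem _)
    obtain ⟨m, u', hzu⟩ := IsDiscreteValuationRing.eq_unit_mul_pow_irreducible hz0 hπ
    have hm : m ≤ r := by
      by_contra hm
      apply hz
      rw [hzu]
      have h6 : (π : O) ^ m ∈ Ideal.span {π} ^ (r+1) :=
        Ideal.pow_le_pow_right (by omega) (Ideal.pow_mem_pow (Ideal.mem_span_singleton_self π) m)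
      exact Ideal.mul_mem_left _ _ h6
    obtain ⟨a, ha, hane⟩ := hχ2
    obtain ⟨y, rfl⟩ := (mem_map_pow π ℓ r a).mp ha
    apply hane
    have key : (π : O) ^ r * y = z * ((↑(u'⁻¹) : O) * (π ^ (r - m) * y)) := by
      calc (π:O) ^ r * y = ((↑u' * ↑u'⁻¹) * (π ^ m * π ^ (r-m))) * y := by
            rw [Units.mul_inv, ← pow_add, Nat.add_sub_cancel' hm, one_mul]
        _ = z * (↑(u'⁻¹) * (π ^ (r-m) * y)) := by rw [hzu]; ring
    rw [key, map_mul]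
    exact hd _
  have hNinj : Function.Injective N := by
    intro x y hxy
    have h1 : χ.mulShift (sInv x) = χ.mulShift (sInv y) := congrArg Subtype.val hxy
    have h2 : ∀ b : O ⧸ Ideal.span {π} ^ ℓ, χ ((sInv x - sInv y) * b) = 1 := by
      intro b
      have h3 : χ (sInv x * b) = χ (sInv y * b) := by
        have h := DFunLike.congr_fun h1 b
        simpa [AddChar.mulShift_apply] using h
      have h4 : χ ((sInv x - sInv y) * b + sInv y * b)
          = χ ((sInv x - sInv y) * b) * χ (sInv y * b) := AddChar.map_add_eq_mul χ _ _
      rw [show (sInv x - sInv y) * b + sInv y * b = sInv x * b by ring, h3] at h4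
      have h5 : χ ((sInv x - sInv y) * b) * χ (sInv y * b) = 1 * χ (sInv y * b) := by
        rw [← h4, one_mul]
      exact mul_right_cancel₀ (addchar_ne_zero χ _) h5
    have hmem := hnondeg _ h2
    have h0 : ρ (sInv x) = ρ (sInv y) := by
      have h0' : ρ (sInv x - sInv y) = 0 := (hker _).mpr hmem
      rw [map_sub] at h0'
      exact sub_eq_zero.mp h0'
    rw [hsInv_eq, hsInv_eq] at h0
    exact h0
  have hNbij : Function.Bijective N := (Nat.bijective_iff_injective_and_card N).mpr ⟨hNinj, hcard⟩
  obtain ⟨x, hx⟩ := hNbij.2 ⟨η, hη⟩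
  have hx1 : χ.mulShift (sInv x) = η := congrArg Subtype.val hx
  obtain ⟨a₀, ha₀⟩ := Ideal.Quotient.mk_surjective (sInv x)
  exact ⟨a₀, by rw [ha₀, hx1]⟩


end helpers

/-- for `0 ≤ s ≤ r ≤ ℓ-1` and characters `χ, χ'` with
`v̂(χ) = v̂(χ') = r`, the following are equivalent:
(i) `χ'` is in the `𝔬^×_{r-s}`-orbit of `χ` (contragredient action);
(ii) `χ = χ'` on the image of `𝔭^s`;
(iii) `χ·χ'⁻¹` is trivial on the image of `𝔭^s` (i.e. `v̂(χχ'⁻¹) ≤ s-1`). -/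

theorem stmt_5 (O : Type) [CommRing O] [IsDomain O] [IsDiscreteValuationRing O]
    (π : O) (hπ : Irreducible π) (q ℓ : ℕ)
    [Finite (O ⧸ Ideal.span {π})] (hq : Nat.card (O ⧸ Ideal.span {π}) = q)
    (s r : ℕ) (hs : s ≤ r) (hr : r ≤ ℓ - 1) (hℓ : 1 ≤ ℓ)
    (χ χ' : AddChar (O ⧸ (Ideal.span {π} ^ ℓ)) ℂ)
    (hχ : χ ∈ dualLevel O π ℓ r) (hχ' : χ' ∈ dualLevel O π ℓ r) :
    ((∃ c : Oˣ, ((c : O) - 1) ∈ Ideal.span {π} ^ (r - s + 1) ∧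
        χ' = χ.mulShift (Ideal.Quotient.mk (Ideal.span {π} ^ ℓ) ((c⁻¹ : Oˣ) : O))) ↔
      (∀ b ∈ idealImage O π ℓ s, χ b = χ' b)) ∧
    ((∀ b ∈ idealImage O π ℓ s, χ b = χ' b) ↔
      (∀ b ∈ idealImage O π ℓ s, χ b * (χ' b)⁻¹ = 1)) := by
  obtain ⟨hχ1, hχ2⟩ := hχ
  obtain ⟨hχ'1, hχ'2⟩ := hχ'
  have hrℓ : r + 1 ≤ ℓ := by omega
  have hsplit : r - s + 1 + s = r + 1 := by omega
  constructor
  · constructor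
    · rintro ⟨c, hc, rfl⟩
      intro b hb
      obtain ⟨y, rfl⟩ := (mem_map_pow π ℓ s b).mp hb
      rw [AddChar.mulShift_apply]
      have hinv : ((↑c⁻¹ : O) - 1) ∈ Ideal.span {π} ^ (r - s + 1) := by
        have h1 : ((↑c⁻¹ : O) - 1) = -((↑c⁻¹ : O) * ((↑c : O) - 1)) := by
          linear_combination c.inv_mul
        rw [h1]
        exact neg_mem (Ideal.mul_mem_left _ _ hc)
      have hmem : ((↑c⁻¹ : O) - 1) * (π ^ s * y) ∈ Ideal.span {π} ^ (r + 1) := by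
        have h2 : π ^ s * y ∈ Ideal.span {π} ^ s :=
          Ideal.mul_mem_right y _ (Ideal.pow_mem_pow (Ideal.mem_span_singleton_self π) s)
        have h3 := Ideal.mul_mem_mul hinv h2
        rwa [← pow_add, hsplit] at h3
      have step : (Ideal.Quotient.mk (Ideal.span {π} ^ ℓ)) ((↑c⁻¹ : O)) *
            (Ideal.Quotient.mk (Ideal.span {π} ^ ℓ)) (π ^ s * y)
          = (Ideal.Quotient.mk (Ideal.span {π} ^ ℓ)) (π ^ s * y) +
            (Ideal.Quotient.mk (Ideal.span {π} ^ ℓ)) (((↑c⁻¹ : O) - 1) * (π ^ s * y)) := by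
        rw [← map_mul, ← map_add]
        congr 1
        ring
      rw [step, AddChar.map_add_eq_mul, hχ1 _ (Ideal.mem_map_of_mem _ hmem), mul_one]
    · intro h
      obtain ⟨a₀, ha₀⟩ := exists_mulShift π hπ ℓ r hrℓ χ hχ1 hχ2 χ' hχ'1
      have hunit : IsUnit a₀ := by
        by_contra hnu
        have hmem : a₀ ∈ Ideal.span {π} := by
          rw [← hπ.maximalIdeal_eq]
          exact (IsLocalRing.mem_maximalIdeal a₀).mpr (mem_nonunits_iff.mpr hnu)
        obtain ⟨w, hw⟩ := Ideal.mem_span_singleton'.mp hmem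
        obtain ⟨a, ha, hane⟩ := hχ'2
        apply hane
        obtain ⟨y, rfl⟩ := (mem_map_pow π ℓ r a).mp ha
        rw [ha₀, AddChar.mulShift_apply, ← map_mul]
        have h5 : a₀ * (π ^ r * y) = π ^ (r + 1) * (w * y) := by rw [← hw]; ring
        rw [h5]
        exact hχ1 _ (Ideal.mem_map_of_mem _ (Ideal.mul_mem_right _ _
          (Ideal.pow_mem_pow (Ideal.mem_span_singleton_self π) (r + 1))))
      have hdiff : a₀ - 1 ∈ Ideal.span {π} ^ (r - s + 1) := by
        by_cases h1 : a₀ - 1 = 0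
        · rw [h1]; exact zero_mem _
        obtain ⟨m, u', hzu⟩ := IsDiscreteValuationRing.eq_unit_mul_pow_irreducible h1 hπ
        by_contra hnot
        have hm : m ≤ r - s := by
          by_contra hm'
          apply hnot
          rw [hzu]
          exact Ideal.mul_mem_left _ _ (Ideal.pow_le_pow_right (by omega)
            (Ideal.pow_mem_pow (Ideal.mem_span_singleton_self π) m))
        obtain ⟨a, ha, hane⟩ := hχ2
        apply hane
        obtain ⟨y, rfl⟩ := (mem_map_pow π ℓ r a).mp ha
        set w : O := (↑(u'⁻¹) : O) * (π ^ (r - s - m) * y) with hwdef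
        have hbmem : (Ideal.Quotient.mk (Ideal.span {π} ^ ℓ)) (π ^ s * w) ∈ idealImage O π ℓ s :=
          (mem_map_pow π ℓ s _).mpr ⟨w, rfl⟩
        have heq := h _ hbmem
        rw [ha₀, AddChar.mulShift_apply] at heq
        have key : (π : O) ^ r * y = (a₀ - 1) * (π ^ s * w) := by
          rw [hzu, hwdef]
          have h9 : ((↑u' : O) * ↑(u'⁻¹)) = 1 := u'.mul_inv
          have h10 : m + (s + (r - s - m)) = r := by omega
          calc (π : O) ^ r * y
              = (((↑u' : O) * ↑(u'⁻¹)) * π ^ (m + (s + (r - s - m)))) * y := by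
                rw [h9, one_mul, h10]
            _ = (↑u' * π ^ m) * (π ^ s * ((↑(u'⁻¹) : O) * (π ^ (r - s - m) * y))) := by
                rw [pow_add, pow_add]; ring
        rw [key]
        have hst : (Ideal.Quotient.mk (Ideal.span {π} ^ ℓ)) a₀ *
              (Ideal.Quotient.mk (Ideal.span {π} ^ ℓ)) (π ^ s * w)
            = (Ideal.Quotient.mk (Ideal.span {π} ^ ℓ)) (π ^ s * w) +
              (Ideal.Quotient.mk (Ideal.span {π} ^ ℓ)) ((a₀ - 1) * (π ^ s * w)) := by
          rw [← map_mul, ← map_add]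
          congr 1
          ring
        rw [hst, AddChar.map_add_eq_mul] at heq
        have heq2 : χ ((Ideal.Quotient.mk (Ideal.span {π} ^ ℓ)) (π ^ s * w)) * 1
            = χ ((Ideal.Quotient.mk (Ideal.span {π} ^ ℓ)) (π ^ s * w)) *
              χ ((Ideal.Quotient.mk (Ideal.span {π} ^ ℓ)) ((a₀ - 1) * (π ^ s * w))) := by
          rw [mul_one]; exact heq
        exact (mul_left_cancel₀ (addchar_ne_zero χ _) heq2).symm
      refine ⟨hunit.unit⁻¹, ?_, ?_⟩
      · have h2 : (↑(hunit.unit⁻¹) : O) * a₀ = 1 := by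
          have h3 := hunit.unit.inv_mul
          rwa [IsUnit.unit_spec] at h3
        have h1 : (↑(hunit.unit⁻¹) : O) - 1 = -((↑(hunit.unit⁻¹) : O) * (a₀ - 1)) := by
          linear_combination h2
        rw [h1]
        exact neg_mem (Ideal.mul_mem_left _ _ hdiff)
      · rw [inv_inv, IsUnit.unit_spec]
        exact ha₀
  · constructor
    · intro h b hb
      rw [h b hb, mul_inv_cancel₀ (addchar_ne_zero χ' b)]
    · intro h b hb
      exact (mul_inv_eq_one₀ (addchar_ne_zero χ' b)).mp (h b hb)
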